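/- For T = {8,2}: b(n) := n(n+6)(n+5)(n²+15n+8)²/(168(n³+27n²+356n-240)) equals (n⁴+14n³-133n²+2638n-10584)/168 + (-4032n²+26208n-15120)/(n³+27n²+356n-240), and for n ≥ 677343 the quantity b(n) is never an integer. -/

import Mathlib

noncomputable def bn82 (n : ℕ) : ℝ :=
  (n : ℝ) * ((n : ℝ) + 6) * ((n : ℝ) + 5) * ((n : ℝ) ^ 2 + 15 * (n : ℝ) + 8) ^ 2
    / (168 * ((n : ℝ) ^ 3 + 27 * (n : ℝ) ^ 2 + 356 * (n : ℝ) - 240))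

lemma bn82_denom_pos (x : ℝ) (hx : 1 ≤ x) :
    0 < x ^ 3 + 27 * x ^ 2 + 356 * x - 240 := by nlinarith [sq_nonneg x, sq_nonneg (x-1)]

lemma bn82_denom_ne (n : ℕ) :
    (n : ℝ) ^ 3 + 27 * (n : ℝ) ^ 2 + 356 * (n : ℝ) - 240 ≠ 0 := by
  rcases Nat.eq_zero_or_pos n with h | h
  · subst h; norm_num
  · have : (1 : ℝ) ≤ (n : ℝ) := by exact_mod_cast h
    exact ne_of_gt (bn82_denom_pos _ this)

lemma bn82_decomp (n : ℕ) : bn82 n =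
    ((n : ℝ) ^ 4 + 14 * (n : ℝ) ^ 3 - 133 * (n : ℝ) ^ 2 + 2638 * (n : ℝ) - 10584) / 168
      + (-4032 * (n : ℝ) ^ 2 + 26208 * (n : ℝ) - 15120)
        / ((n : ℝ) ^ 3 + 27 * (n : ℝ) ^ 2 + 356 * (n : ℝ) - 240) := by
  have hD := bn82_denom_ne n
  unfold bn82
  rw [div_add_div _ _ (by norm_num : (168:ℝ) ≠ 0) hD, div_eq_div_iff (mul_ne_zero (by norm_num) hD) (mul_ne_zero (by norm_num) hD)]
  ring

/-- The decomposition of `b_{n,{8,2}}` and its non-integrality for `n ≥ 677343`. -/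
theorem bn82_props :
    (∀ n : ℕ, bn82 n =
        ((n : ℝ) ^ 4 + 14 * (n : ℝ) ^ 3 - 133 * (n : ℝ) ^ 2 + 2638 * (n : ℝ) - 10584) / 168
          + (-4032 * (n : ℝ) ^ 2 + 26208 * (n : ℝ) - 15120)
            / ((n : ℝ) ^ 3 + 27 * (n : ℝ) ^ 2 + 356 * (n : ℝ) - 240))
      ∧ ∀ n : ℕ, 677343 ≤ n → ¬∃ m : ℤ, bn82 n = m := by
  refine ⟨bn82_decomp, ?_⟩
  rintro n hn ⟨m, hm⟩
  set x : ℝ := (n : ℝ) with hxdef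
  have hx : (677343 : ℝ) ≤ x := by rw [hxdef]; exact_mod_cast hn
  have hx1 : (1 : ℝ) ≤ x := by linarith
  have hD : 0 < x ^ 3 + 27 * x ^ 2 + 356 * x - 240 := bn82_denom_pos x hx1
  -- the remainder term
  set r : ℝ := (-4032 * x ^ 2 + 26208 * x - 15120) / (x ^ 3 + 27 * x ^ 2 + 356 * x - 240)
    with hrdef
  have hNneg : -4032 * x ^ 2 + 26208 * x - 15120 < 0 := by nlinarith
  have hrneg : r < 0 := div_neg_of_neg_of_pos hNneg hD
  -- |r| < 1/168 : show D + 168 * 168 * |N| ... i.e. 168*N/D > -1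
  have hkey : 0 < x ^ 3 + 27 * x ^ 2 + 356 * x - 240 + 168 * (-4032 * x ^ 2 + 26208 * x - 15120) := by
    rcases le_or_gt (x : ℝ) 677349 with hle | hgt
    · nlinarith
    · nlinarith [sq_nonneg x, mul_pos (mul_pos (by linarith : (0:ℝ) < x) (by linarith : (0:ℝ) < x)) (by linarith : (0:ℝ) < x - 677349)]
  have hrgt : -1 < 168 * r := by
    rw [hrdef, mul_div_assoc']
    rw [lt_div_iff₀ hD]
    nlinarith [hkey]
  have hrlt : 168 * r < 0 := by linarith
  -- integer part
  have hdec := bn82_decomp n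
  rw [hm] at hdec
  set p : ℤ := (n : ℤ) ^ 4 + 14 * (n : ℤ) ^ 3 - 133 * (n : ℤ) ^ 2 + 2638 * (n : ℤ) - 10584
    with hpdef
  have hpc : (p : ℝ) = x ^ 4 + 14 * x ^ 3 - 133 * x ^ 2 + 2638 * x - 10584 := by
    rw [hpdef]; push_cast; ring
  have hk : ((168 * m - p : ℤ) : ℝ) = 168 * r := by
    push_cast
    rw [hpc, hrdef]
    rw [← hxdef] at hdec
    linarith [hdec]
  have h1 : (168 * m - p : ℤ) < 0 := by exact_mod_cast hk ▸ hrlt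
  have h2 : (-1 : ℤ) < 168 * m - p := by exact_mod_cast hk ▸ hrgt
  omega
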